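/- A real polynomial of odd degree with nonnegative coefficients and positive leading and constant coefficients cannot divide ∑_{s=0}^{t} x^s when t is odd; equivalently, if p and q are real polynomials with nonnegative coefficients, positive constant terms, both of odd degree, then p·q ≠ c·∑_{s=0}^{t} x^s for any c > 0. -/
import Mathlib


open Polynomial Finset

lemma exists_neg_root_aux (p : ℝ[X]) (hp : ∀ k, 0 ≤ p.coeff k)
    (hp0 : 0 < p.coeff 0) (hpodd : Odd p.natDegree) :
    ∃ r : ℝ, r < 0 ∧ p.eval r = 0 := by
  have hpne : p ≠ 0 := fun h => by simp [h] at hp0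
  have hdeg : 0 < p.natDegree := hpodd.pos
  have hlc : 0 < p.leadingCoeff := lt_of_le_of_ne (hp _) (Ne.symm (mt leadingCoeff_eq_zero.mp hpne))
  set P : ℝ[X] := p.comp (-X) with hP
  have hXd : (-X : ℝ[X]).natDegree = 1 := by simp
  have hPlc : P.leadingCoeff = -p.leadingCoeff := by
    rw [hP, leadingCoeff_comp (by rw [hXd]; norm_num)]
    have h1 : (-X : ℝ[X]).leadingCoeff = -1 := by simp [leadingCoeff]
    rw [h1, hpodd.neg_one_pow, mul_neg_one]
  have hPne : P ≠ 0 := fun h => by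
    rw [h, leadingCoeff_zero] at hPlc; linarith
  have hPdegpos : 0 < P.degree := by
    rw [degree_eq_natDegree hPne, hP, natDegree_comp, hXd, mul_one]
    exact_mod_cast hdeg
  have htend : Filter.Tendsto (fun x => P.eval x) Filter.atTop Filter.atBot :=
    P.tendsto_atBot_of_leadingCoeff_nonpos hPdegpos (by rw [hPlc]; linarith)
  obtain ⟨x, hx, hx0⟩ :=
    ((htend.eventually (Filter.eventually_lt_atBot 0)).and
      (Filter.eventually_ge_atTop (0 : ℝ))).exists
  have hf0 : P.eval 0 = p.coeff 0 := by
    rw [hP, eval_comp]; simp [← coeff_zero_eq_eval_zero]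
  have hmem : (0 : ℝ) ∈ Set.Icc (P.eval x) (P.eval 0) :=
    ⟨le_of_lt hx, hf0 ▸ le_of_lt hp0⟩
  obtain ⟨y, hy, hyr⟩ := intermediate_value_Icc' hx0 (P.continuous.continuousOn) hmem
  have hyr' : P.eval y = 0 := hyr
  have hy0 : 0 < y := hy.1.lt_of_ne' (fun h => by rw [h] at hyr'; rw [hf0] at hyr'; linarith)
  refine ⟨-y, by linarith, ?_⟩
  rwa [hP, eval_comp, eval_neg, eval_X] at hyr'

lemma natDegree_geom_sum_X (t : ℕ) :
    (∑ s ∈ Finset.range (t + 1), (X : ℝ[X]) ^ s).natDegree = t := by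
  apply le_antisymm
  · apply natDegree_sum_le_of_forall_le
    intro i hi
    rw [natDegree_X_pow]
    exact Nat.lt_succ_iff.mp (Finset.mem_range.mp hi)
  · apply le_natDegree_of_ne_zero
    rw [finset_sum_coeff]
    have : ∀ i ∈ Finset.range (t + 1), ((X : ℝ[X]) ^ i).coeff t = if i = t then 1 else 0 := by
      intro i _; simp [coeff_X_pow, eq_comm]
    rw [Finset.sum_congr rfl this, Finset.sum_ite_eq' (Finset.range (t + 1)) t (fun _ => (1 : ℝ))]
    simp

theorem no_two_odd_degree_factors (p q : ℝ[X])
    (hp : ∀ k, 0 ≤ p.coeff k) (hq : ∀ k, 0 ≤ q.coeff k)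
    (hp0 : 0 < p.coeff 0) (hq0 : 0 < q.coeff 0)
    (hpodd : Odd p.natDegree) (hqodd : Odd q.natDegree) :
    ∀ (t : ℕ) (c : ℝ), 0 < c →
      p * q ≠ Polynomial.C c * ∑ s ∈ Finset.range (t + 1), (X : ℝ[X]) ^ s := by
  intro t c hc heq
  have hpne : p ≠ 0 := fun h => by simp [h] at hp0
  have hqne : q ≠ 0 := fun h => by simp [h] at hq0
  rcases Nat.even_or_odd t with ht | ht
  · -- t even: evaluate at a negative root of p
    obtain ⟨r, hr, hroot⟩ := exists_neg_root_aux p hp hp0 hpodd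
    have heval := congrArg (Polynomial.eval r) heq
    rw [eval_mul, hroot, zero_mul, eval_mul, eval_C, eval_geom_sum] at heval
    have hr1 : r ≠ 1 := by linarith
    rw [geom_sum_eq hr1] at heval
    have hnum : r ^ (t + 1) - 1 < 0 := by
      have : r ^ (t + 1) < 0 := Odd.pow_neg (by simpa using ht.add_one) hr
      linarith
    have hpos : 0 < (r ^ (t + 1) - 1) / (r - 1) :=
      div_pos_of_neg_of_neg hnum (by linarith)
    have : 0 < c * ((r ^ (t + 1) - 1) / (r - 1)) := mul_pos hc hpos
    linarith [heval]
  · -- t odd: degree parity contradiction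
    have hdeg := congrArg Polynomial.natDegree heq
    rw [natDegree_mul hpne hqne, natDegree_C_mul (ne_of_gt hc), natDegree_geom_sum_X] at hdeg
    have : Even (p.natDegree + q.natDegree) := hpodd.add_odd hqodd
    rw [hdeg] at this
    exact (Nat.not_even_iff_odd.mpr ht) this
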